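/- Let n ≥ 1, let J be a constant diagonal n×n real matrix, and let m, ρ be real constants with D := mρ². Suppose ω : ℝ → Mₙ(ℝ) is differentiable with ω(t)ᵀ = −ω(t) for all t, and γ, v, F : ℝ → ℝⁿ are differentiable, satisfying for all t: (i) the Euler–Lagrange equation M′(t) + [ω(t), M(t)] = ρ·(F(t)γ(t)ᵀ − γ(t)F(t)ᵀ) where M := Jω + ωJ and [A,B] := AB − BA; (ii) m·(v′(t) + ω(t)v(t)) = F(t); (iii) γ′(t) = −ω(t)γ(t); and (iv) the rolling constraint v(t) = −ρ·ω(t)γ(t). Define Γ(t) := γ(t)γ(t)ᵀ and K(t) := Jω(t) + ω(t)J + D(Γ(t)ω(t) + ω(t)Γ(t)). Then for all t, K′(t) + [ω(t), K(t)] = 0 and Γ′(t) + [ω(t), Γ(t)] = 0. -/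

import Mathlib

open Matrix

private lemma vmv_left {n : ℕ} (A : Matrix (Fin n) (Fin n) ℝ) (x y : Fin n → ℝ) :
    vecMulVec (A *ᵥ x) y = A * vecMulVec x y := by
  ext i j; simp [vecMulVec_apply, mul_apply, mulVec, dotProduct, Finset.sum_mul, mul_assoc]

private lemma vmv_right {n : ℕ} (A : Matrix (Fin n) (Fin n) ℝ) (x y : Fin n → ℝ) :
    vecMulVec x (A *ᵥ y) = vecMulVec x y * Aᵀ := by
  ext i j
  simp only [vecMulVec_apply, mul_apply, mulVec, dotProduct, transpose_apply, Finset.mul_sum]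
  congr 1; ext k; ring

private lemma vmv_neg_left {n : ℕ} (x y : Fin n → ℝ) :
    vecMulVec (-x) y = -vecMulVec x y := by
  ext i j; simp [vecMulVec_apply]

private lemma vmv_neg_right {n : ℕ} (x y : Fin n → ℝ) :
    vecMulVec x (-y) = -vecMulVec x y := by
  ext i j; simp [vecMulVec_apply]

private lemma vmv_smul_left {n : ℕ} (c : ℝ) (x y : Fin n → ℝ) :
    vecMulVec (c • x) y = c • vecMulVec x y := by
  ext i j; simp [vecMulVec_apply]; ring

private lemma vmv_smul_right {n : ℕ} (c : ℝ) (x y : Fin n → ℝ) :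
    vecMulVec x (c • y) = c • vecMulVec x y := by
  ext i j; simp [vecMulVec_apply]; ring

private lemma hasDerivAt_matmul {n : ℕ} {A B : ℝ → Matrix (Fin n) (Fin n) ℝ}
    {A' B' : Matrix (Fin n) (Fin n) ℝ} {t : ℝ}
    (hA : ∀ i j, HasDerivAt (fun s => A s i j) (A' i j) t)
    (hB : ∀ i j, HasDerivAt (fun s => B s i j) (B' i j) t)
    (i j : Fin n) :
    HasDerivAt (fun s => (A s * B s) i j) ((A' * B t + A t * B') i j) t := by
  have h := HasDerivAt.fun_sum (fun k (_ : k ∈ Finset.univ) => (hA i k).fun_mul (hB k j))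
  simp only [mul_apply, Matrix.add_apply]
  simpa [Finset.sum_add_distrib] using h

private lemma key_identity {n : ℕ} (J A W G Gd : Matrix (Fin n) (Fin n) ℝ) (D : ℝ)
    (hGd : Gd = -(A * G) + G * A)
    (h1 : J * W + W * J + (A * (J * A + A * J) - (J * A + A * J) * A)
      = -(D • (W * G + G * W))) :
    (0 * A + J * W) + (W * J + A * 0) + D • ((Gd * A + G * W) + (W * G + A * Gd))
      = -((A * (J * A + A * J + D • (G * A + A * G))
        - (J * A + A * J + D • (G * A + A * G)) * A)) := by
  subst hGd
  have e1 : J * W + W * J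
      = -(D • (W * G + G * W)) - (A * (J * A + A * J) - (J * A + A * J) * A) :=
    eq_sub_of_add_eq h1
  have hid : (((-(A * G) + G * A) * A + G * W) + (W * G + A * (-(A * G) + G * A)))
      = (W * G + G * W) - (A * (G * A + A * G) - (G * A + A * G) * A) := by
    noncomm_ring
  have hrhs : -((A * (J * A + A * J + D • (G * A + A * G))
        - (J * A + A * J + D • (G * A + A * G)) * A))
      = -(A * (J * A + A * J) - (J * A + A * J) * A)
        - D • (A * (G * A + A * G) - (G * A + A * G) * A) := by
    simp only [mul_add, add_mul, mul_smul_comm, smul_mul_assoc, smul_sub]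
    abel
  rw [hid, hrhs, zero_mul, mul_zero, add_zero, zero_add, e1, smul_sub]
  abel


private lemma hasDerivAt_K {n : ℕ} {ωf Γf : ℝ → Matrix (Fin n) (Fin n) ℝ}
    {W Gd : Matrix (Fin n) (Fin n) ℝ} {t : ℝ} (J : Matrix (Fin n) (Fin n) ℝ) (D : ℝ)
    (hω : ∀ i j, HasDerivAt (fun s => ωf s i j) (W i j) t)
    (hΓ : ∀ i j, HasDerivAt (fun s => Γf s i j) (Gd i j) t)
    (i j : Fin n) :
    HasDerivAt (fun s => (J * ωf s + ωf s * J + D • (Γf s * ωf s + ωf s * Γf s)) i j)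
      ((show Matrix (Fin n) (Fin n) ℝ from (0 * ωf t + J * W) + (W * J + ωf t * 0)
        + D • ((Gd * ωf t + Γf t * W) + (W * Γf t + ωf t * Gd))) i j) t := by
  have c1 : ∀ i j, HasDerivAt (fun _ : ℝ => J i j)
      ((0 : Matrix (Fin n) (Fin n) ℝ) i j) t := by
    intro i j; simpa using hasDerivAt_const t (J i j)
  have d1 := hasDerivAt_matmul c1 hω i j
  have d2 := hasDerivAt_matmul hω c1 i j
  have d3 := hasDerivAt_matmul hΓ hω i j
  have d4 := hasDerivAt_matmul hω hΓ i j
  have d5 := (d3.add d4).const_mul D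
  have h := (d1.add d2).add d5
  simp only [Matrix.add_apply, Matrix.smul_apply, smul_eq_mul] at h ⊢
  exact h

theorem chaplygin_sphere_closed_system
    (n : ℕ) (hn : 1 ≤ n)
    (J : Matrix (Fin n) (Fin n) ℝ) (hJ : J.IsDiag) (m ρ : ℝ)
    (ω ω' : ℝ → Matrix (Fin n) (Fin n) ℝ)
    (γ γ' v v' F : ℝ → Fin n → ℝ)
    (hω : ∀ t i j, HasDerivAt (fun s => ω s i j) (ω' t i j) t)
    (hskew : ∀ t, (ω t)ᵀ = -(ω t))
    (hγd : ∀ t i, HasDerivAt (fun s => γ s i) (γ' t i) t)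
    (hvd : ∀ t i, HasDerivAt (fun s => v s i) (v' t i) t)
    (hEL : ∀ t, (J * ω' t + ω' t * J)
        + (ω t * (J * ω t + ω t * J) - (J * ω t + ω t * J) * ω t)
        = ρ • (vecMulVec (F t) (γ t) - vecMulVec (γ t) (F t)))
    (htrans : ∀ t, m • (v' t + ω t *ᵥ v t) = F t)
    (hγeq : ∀ t, γ' t = -(ω t *ᵥ γ t))
    (hconstr : ∀ t, v t = -(ρ • (ω t *ᵥ γ t))) :
    (∀ t i j,
      HasDerivAt
        (fun s => (J * ω s + ω s * J + (m * ρ^2) •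
          (vecMulVec (γ s) (γ s) * ω s + ω s * vecMulVec (γ s) (γ s))) i j)
        (-((ω t * (J * ω t + ω t * J + (m * ρ^2) •
              (vecMulVec (γ t) (γ t) * ω t + ω t * vecMulVec (γ t) (γ t)))
          - (J * ω t + ω t * J + (m * ρ^2) •
              (vecMulVec (γ t) (γ t) * ω t + ω t * vecMulVec (γ t) (γ t))) * ω t) i j)) t)
    ∧ (∀ t i j,
      HasDerivAt (fun s => vecMulVec (γ s) (γ s) i j)
        (-((ω t * vecMulVec (γ t) (γ t) - vecMulVec (γ t) (γ t) * ω t) i j)) t) := by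
  have hΓd : ∀ t i j, HasDerivAt (fun s => vecMulVec (γ s) (γ s) i j)
      ((vecMulVec (γ' t) (γ t) + vecMulVec (γ t) (γ' t)) i j) t := by
    intro t i j
    have h := (hγd t i).fun_mul (hγd t j)
    simpa [vecMulVec_apply, Matrix.add_apply] using h
  have hWskew : ∀ t, (ω' t)ᵀ = -(ω' t) := by
    intro t
    ext i j
    have h1 : ∀ s, ω s j i = -(ω s i j) := by
      intro s
      have := congrArg (fun X => X i j) (hskew s)
      simpa using this
    have h2 : HasDerivAt (fun s => ω s j i) (-(ω' t i j)) t :=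
      (hω t i j).neg.congr_of_eventuallyEq (Filter.Eventually.of_forall fun s => h1 s)
    have := (hω t j i).unique h2
    simpa using this
  have hGd : ∀ t, vecMulVec (γ' t) (γ t) + vecMulVec (γ t) (γ' t)
      = -(ω t * vecMulVec (γ t) (γ t)) + vecMulVec (γ t) (γ t) * ω t := by
    intro t
    rw [hγeq t, vmv_neg_left, vmv_neg_right, vmv_left, vmv_right, hskew t]
    simp [mul_neg]
  have hv' : ∀ t, v' t = -(ρ • (ω' t *ᵥ γ t + ω t *ᵥ γ' t)) := by
    intro t
    funext i
    have h1 : ∀ s, v s i = -(ρ * ∑ k, ω s i k * γ s k) := by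
      intro s
      have := congrFun (hconstr s) i
      simpa [mulVec, dotProduct] using this
    have h2 : HasDerivAt (fun s => v s i)
        (-(ρ * ∑ k, (ω' t i k * γ t k + ω t i k * γ' t k))) t := by
      have h3 := ((HasDerivAt.fun_sum (fun k (_ : k ∈ Finset.univ) =>
        (hω t i k).fun_mul (hγd t k))).const_mul ρ).neg
      exact h3.congr_of_eventuallyEq (Filter.Eventually.of_forall fun s => h1 s)
    have h4 := (hvd t i).unique h2
    rw [h4]
    simp [mulVec, dotProduct, Finset.mul_sum, Finset.sum_add_distrib, mul_add]
  have hF : ∀ t, F t = -((m * ρ) • (ω' t *ᵥ γ t)) := by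
    intro t
    rw [← htrans t, hv' t, hconstr t, hγeq t]
    simp only [mulVec_add, Matrix.mulVec_neg, Matrix.mulVec_smul, smul_add, smul_neg, smul_smul]
    module
  have h1 : ∀ t, J * ω' t + ω' t * J
      + (ω t * (J * ω t + ω t * J) - (J * ω t + ω t * J) * ω t)
      = -((m * ρ^2) • (ω' t * vecMulVec (γ t) (γ t)
        + vecMulVec (γ t) (γ t) * ω' t)) := by
    intro t
    rw [hEL t, hF t, vmv_neg_left, vmv_neg_right, vmv_smul_left, vmv_smul_right,
      vmv_left, vmv_right, hWskew t]
    simp only [mul_neg, neg_neg, smul_neg, sub_neg_eq_add, smul_smul, smul_add, neg_add]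
    module
  constructor
  · intro t i j
    have hK := hasDerivAt_K J (m * ρ^2) (hω t) (hΓd t) i j
    have key := key_identity J (ω t) (ω' t) (vecMulVec (γ t) (γ t))
      (vecMulVec (γ' t) (γ t) + vecMulVec (γ t) (γ' t)) (m * ρ^2)
      (hGd t) (h1 t)
    have hval := congrArg (fun X : Matrix (Fin n) (Fin n) ℝ => X i j) key
    simp only [Matrix.neg_apply] at hval
    exact hval ▸ hK
  · intro t i j
    have h := hΓd t i j
    have heq : vecMulVec (γ' t) (γ t) + vecMulVec (γ t) (γ' t)
        = -(ω t * vecMulVec (γ t) (γ t) - vecMulVec (γ t) (γ t) * ω t) := by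
      rw [hGd t]; abel
    rw [heq] at h
    simpa using h
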